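/- Define κ̄_α(θ) = α^α (sin((1+α)θ)/sin θ) (sin((1+α)θ)/sin(αθ))^α for θ ∈ (0, π/2) and α ∈ (0,1]. Then θ ↦ κ̄_α(θ) is strictly decreasing on (0, π/2), with limits κ̄_α(0+) = (1+α)^{α+1} and κ̄_α(π/2−) = α^α cos^{α+1}(πα/2)/sin^α(πα/2), and κ̄_α(π/(2(1+α))) = α^α csc(π/(2(1+α)))/sin^α(πα/(2(1+α))). -/

import Mathlib

open Filter

/-- The function κ̄_α. -/
noncomputable def kappaBar (α θ : ℝ) : ℝ :=
  α ^ α * (Real.sin ((1+α)*θ) / Real.sin θ) *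
    (Real.sin ((1+α)*θ) / Real.sin (α*θ)) ^ α

private lemma g_anti : StrictAntiOn (fun t => t * (Real.cos t / Real.sin t)) (Set.Ioo 0 Real.pi) := by
  apply strictAntiOn_of_deriv_neg (convex_Ioo _ _)
  · apply ContinuousOn.mul continuousOn_id
    exact Real.continuousOn_cos.div Real.continuousOn_sin
      (fun t ht => (Real.sin_pos_of_pos_of_lt_pi ht.1 ht.2).ne')
  · intro t ht
    rw [interior_Ioo] at ht
    obtain ⟨ht1, ht2⟩ := ht
    have hs : 0 < Real.sin t := Real.sin_pos_of_pos_of_lt_pi ht1 ht2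
    have hd : HasDerivAt (fun t => t * (Real.cos t / Real.sin t))
        (1 * (Real.cos t / Real.sin t) + t * ((-Real.sin t * Real.sin t - Real.cos t * Real.cos t) / Real.sin t ^ 2)) t :=
      (hasDerivAt_id t).mul ((Real.hasDerivAt_cos t).div (Real.hasDerivAt_sin t) hs.ne')
    rw [hd.deriv]
    have he : 1 * (Real.cos t / Real.sin t) + t * ((-Real.sin t * Real.sin t - Real.cos t * Real.cos t) / Real.sin t ^ 2)
        = (Real.cos t * Real.sin t - t) / Real.sin t ^ 2 := by
      field_simp
      linear_combination (-t) * (Real.sin_sq_add_cos_sq t)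
    rw [he]
    apply div_neg_of_neg_of_pos _ (by positivity)
    nlinarith [Real.sin_lt (by linarith : (0:ℝ) < 2 * t), Real.sin_two_mul t]

private lemma cot_key (α θ : ℝ) (hα : 0 < α) (hα1 : α ≤ 1) (hθ : 0 < θ) (hθ2 : θ < Real.pi/2) :
    (1+α)^2 * (Real.cos ((1+α)*θ) / Real.sin ((1+α)*θ)) <
      Real.cos θ / Real.sin θ + α^2 * (Real.cos (α*θ) / Real.sin (α*θ)) := by
  have hpi := Real.pi_pos
  have hx : θ ∈ Set.Ioo 0 Real.pi := ⟨hθ, by linarith⟩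
  have hy : α*θ ∈ Set.Ioo 0 Real.pi := ⟨by positivity, by nlinarith⟩
  have hxy : (1+α)*θ ∈ Set.Ioo 0 Real.pi := ⟨by positivity, by nlinarith⟩
  have h1 := g_anti hx hxy (by nlinarith)
  have h2 := g_anti hy hxy (by nlinarith)
  simp only at h1 h2
  nlinarith [mul_pos hα hθ, mul_lt_mul_of_pos_left h2 hα]

private lemma hasDeriv_logsin (c θ : ℝ) (h : Real.sin (c*θ) ≠ 0) :
    HasDerivAt (fun x => Real.log (Real.sin (c*x)))
      ((Real.sin (c*θ))⁻¹ * (Real.cos (c*θ) * c)) θ := by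
  have h1 : HasDerivAt (fun x : ℝ => c*x) c θ := by
    simpa using (hasDerivAt_id θ).const_mul c
  have h2 : HasDerivAt (fun x => Real.sin (c*x)) (Real.cos (c*θ) * c) θ :=
    (Real.hasDerivAt_sin (c*θ)).comp θ h1
  exact (Real.hasDerivAt_log h).comp θ h2

private noncomputable def Lfun (α : ℝ) : ℝ → ℝ := fun θ =>
  Real.log α * α + ((1+α) * Real.log (Real.sin ((1+α)*θ))
    - Real.log (Real.sin θ) - α * Real.log (Real.sin (α*θ)))

private lemma L_hasDeriv (α θ : ℝ) (hα : 0 < α) (hα1 : α ≤ 1) (hθ : 0 < θ) (hθ2 : θ < Real.pi/2) :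
    HasDerivAt (Lfun α)
      ((1+α) * ((Real.sin ((1+α)*θ))⁻¹ * (Real.cos ((1+α)*θ) * (1+α)))
        - (Real.sin (1*θ))⁻¹ * (Real.cos (1*θ) * 1)
        - α * ((Real.sin (α*θ))⁻¹ * (Real.cos (α*θ) * α))) θ := by
  have hpi := Real.pi_pos
  have hs1 : Real.sin ((1+α)*θ) ≠ 0 :=
    (Real.sin_pos_of_pos_of_lt_pi (by positivity) (by nlinarith)).ne'
  have hs : Real.sin (1*θ) ≠ 0 :=
    (Real.sin_pos_of_pos_of_lt_pi (by linarith [one_mul θ]) (by nlinarith)).ne'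
  have hsa : Real.sin (α*θ) ≠ 0 :=
    (Real.sin_pos_of_pos_of_lt_pi (by positivity) (by nlinarith)).ne'
  have hd := ((((hasDeriv_logsin (1+α) θ hs1).const_mul (1+α)).sub
      (hasDeriv_logsin 1 θ hs)).sub ((hasDeriv_logsin α θ hsa).const_mul α)).const_add (Real.log α * α)
  refine hd.congr_of_eventuallyEq (Filter.Eventually.of_forall fun x => ?_)
  simp [Lfun, one_mul]

private lemma sin_div_tendsto :
    Tendsto (fun y : ℝ => Real.sin y / y) (nhdsWithin 0 {0}ᶜ) (nhds 1) := by
  have h := hasDerivAt_iff_tendsto_slope.mp (Real.hasDerivAt_sin 0)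
  rw [Real.cos_zero] at h
  refine h.congr fun y => ?_
  simp [slope_def_field]

private lemma ratio_tendsto (a b : ℝ) (ha : 0 < a) (hb : 0 < b) :
    Tendsto (fun θ => Real.sin (a*θ) / Real.sin (b*θ)) (nhdsWithin 0 (Set.Ioi 0)) (nhds (a/b)) := by
  have hpi := Real.pi_pos
  have hmap : ∀ c : ℝ, 0 < c →
      Tendsto (fun θ : ℝ => c*θ) (nhdsWithin 0 (Set.Ioi 0)) (nhdsWithin 0 {0}ᶜ) := by
    intro c hc
    apply tendsto_nhdsWithin_of_tendsto_nhds_of_eventually_within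
    · simpa using ((continuous_mul_left c).tendsto (0:ℝ)).mono_left nhdsWithin_le_nhds
    · filter_upwards [eventually_mem_nhdsWithin] with θ hθ
      exact Set.mem_compl_singleton_iff.mpr (mul_pos hc hθ).ne'
  have h1 := sin_div_tendsto.comp (hmap a ha)
  have h2 := sin_div_tendsto.comp (hmap b hb)
  have h3 := (h1.div h2 one_ne_zero).mul_const (a/b)
  rw [show (1:ℝ)/1*(a/b) = a/b by ring] at h3
  refine h3.congr' ?_
  filter_upwards [Ioo_mem_nhdsGT_of_mem (show (0:ℝ) ∈ Set.Ico 0 (Real.pi/b) from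
    ⟨le_refl 0, div_pos hpi hb⟩)] with θ hθ
  have hsb : Real.sin (b*θ) ≠ 0 := by
    refine (Real.sin_pos_of_pos_of_lt_pi (mul_pos hb hθ.1) ?_).ne'
    have := hθ.2
    calc b*θ < b*(Real.pi/b) := by exact mul_lt_mul_of_pos_left this hb
    _ = Real.pi := by field_simp
  have hsb' : Real.sin (θ*b) ≠ 0 := by rwa [mul_comm]
  simp only [Function.comp, Pi.div_apply]
  field_simp [ha.ne', hb.ne', hθ.1.ne', hsb, hsb']

theorem kappaBar_properties (α : ℝ) (hα : α ∈ Set.Ioc (0:ℝ) 1) :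
    StrictAntiOn (kappaBar α) (Set.Ioo 0 (Real.pi/2)) ∧
    Tendsto (kappaBar α) (nhdsWithin 0 (Set.Ioi 0)) (nhds ((1+α) ^ (α+1))) ∧
    Tendsto (kappaBar α) (nhdsWithin (Real.pi/2) (Set.Iio (Real.pi/2)))
      (nhds (α ^ α * Real.cos (Real.pi*α/2) ^ (α+1) / Real.sin (Real.pi*α/2) ^ α)) ∧
    kappaBar α (Real.pi / (2*(1+α)))
      = α ^ α * (1 / Real.sin (Real.pi / (2*(1+α)))) /
          Real.sin (Real.pi*α / (2*(1+α))) ^ α := by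
  obtain ⟨hα0, hα1⟩ := hα
  have hpi := Real.pi_pos
  have h1α : (0:ℝ) < 1 + α := by linarith
  refine ⟨?_, ?_, ?_, ?_⟩
  · -- Strict antitonicity
    -- kappaBar = exp ∘ Lfun on the interval
    have heq : ∀ θ ∈ Set.Ioo 0 (Real.pi/2), kappaBar α θ = Real.exp (Lfun α θ) := by
      intro θ hθ
      obtain ⟨hθ1, hθ2⟩ := hθ
      have hs1 : 0 < Real.sin ((1+α)*θ) :=
        Real.sin_pos_of_pos_of_lt_pi (by positivity) (by nlinarith)
      have hs : 0 < Real.sin θ := Real.sin_pos_of_pos_of_lt_pi hθ1 (by nlinarith)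
      have hsa : 0 < Real.sin (α*θ) :=
        Real.sin_pos_of_pos_of_lt_pi (by positivity) (by nlinarith)
      have hL : Lfun α θ = Real.log α * α + (Real.log (Real.sin ((1+α)*θ)) - Real.log (Real.sin θ))
          + Real.log (Real.sin ((1+α)*θ) / Real.sin (α*θ)) * α := by
        rw [Real.log_div hs1.ne' hsa.ne', Lfun]; ring
      rw [hL, Real.exp_add, Real.exp_add, ← Real.rpow_def_of_pos hα0,
        ← Real.rpow_def_of_pos (div_pos hs1 hsa), Real.exp_sub,
        Real.exp_log hs1, Real.exp_log hs]
      rfl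
    have hLanti : StrictAntiOn (Lfun α) (Set.Ioo 0 (Real.pi/2)) := by
      apply strictAntiOn_of_deriv_neg (convex_Ioo _ _)
      · apply ContinuousOn.add continuousOn_const
        have hc : ∀ c : ℝ, 0 < c → c ≤ 2 → ContinuousOn (fun θ : ℝ => Real.log (Real.sin (c*θ)))
            (Set.Ioo 0 (Real.pi/2)) := by
          intro c hc1 hc2
          apply ContinuousOn.log
          · exact (Real.continuous_sin.comp (continuous_const.mul continuous_id)).continuousOn
          · intro θ hθ
            exact (Real.sin_pos_of_pos_of_lt_pi (mul_pos hc1 hθ.1)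
              (by nlinarith [hθ.1, hθ.2])).ne'
        apply ContinuousOn.sub
        apply ContinuousOn.sub
        · exact (hc (1+α) h1α (by linarith)).const_smul (1+α)
        · simpa using hc 1 one_pos (by norm_num)
        · exact (hc α hα0 (by linarith)).const_smul α
      · intro θ hθ
        rw [interior_Ioo] at hθ
        obtain ⟨hθ1, hθ2⟩ := hθ
        have hd := L_hasDeriv α θ hα0 hα1 hθ1 hθ2
        rw [hd.deriv]
        have hk := cot_key α θ hα0 hα1 hθ1 hθ2
        have : (1+α) * ((Real.sin ((1+α)*θ))⁻¹ * (Real.cos ((1+α)*θ) * (1+α)))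
            - (Real.sin (1*θ))⁻¹ * (Real.cos (1*θ) * 1)
            - α * ((Real.sin (α*θ))⁻¹ * (Real.cos (α*θ) * α))
            = (1+α)^2 * (Real.cos ((1+α)*θ) / Real.sin ((1+α)*θ))
              - (Real.cos θ / Real.sin θ + α^2 * (Real.cos (α*θ) / Real.sin (α*θ))) := by
          rw [one_mul]; ring
        rw [this]
        linarith
    intro x hx y hy hxy
    rw [heq x hx, heq y hy]
    exact Real.exp_lt_exp.mpr (hLanti hx hy hxy)
  · -- limit at 0+
    have hrat1 : Tendsto (fun θ => Real.sin ((1+α)*θ) / Real.sin θ)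
        (nhdsWithin 0 (Set.Ioi 0)) (nhds ((1+α)/1)) := by
      simpa [one_mul] using ratio_tendsto (1+α) 1 h1α one_pos
    have hrat2 := ratio_tendsto (1+α) α h1α hα0
    have h := ((tendsto_const_nhds (x := α^α)).mul hrat1).mul (hrat2.rpow_const (Or.inr hα0.le))
    have hval : α^α * ((1+α)/1) * ((1+α)/α)^α = (1+α)^(α+1) := by
      rw [div_one, Real.div_rpow (by linarith) hα0.le,
        Real.rpow_add_one (by positivity : (1+α) ≠ 0)]
      have hne : α^α ≠ 0 := (Real.rpow_pos_of_pos hα0 α).ne'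
      field_simp
    rw [← hval]
    exact h
  · -- limit at π/2−
    have hsinpos : 0 < Real.sin (α*(Real.pi/2)) :=
      Real.sin_pos_of_pos_of_lt_pi (by positivity) (by nlinarith)
    have hcosnn : 0 ≤ Real.cos (α*(Real.pi/2)) :=
      Real.cos_nonneg_of_mem_Icc ⟨by nlinarith, by nlinarith⟩
    have hcont : ContinuousAt (kappaBar α) (Real.pi/2) := by
      have hc1 : ContinuousAt (fun θ : ℝ => Real.sin ((1+α)*θ)) (Real.pi/2) :=
        (Real.continuous_sin.comp (continuous_const.mul continuous_id)).continuousAt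
      have hc2 : ContinuousAt (fun θ : ℝ => Real.sin (α*θ)) (Real.pi/2) :=
        (Real.continuous_sin.comp (continuous_const.mul continuous_id)).continuousAt
      apply ContinuousAt.mul
      apply ContinuousAt.mul continuousAt_const
      · exact hc1.div Real.continuous_sin.continuousAt (by simp [Real.sin_pi_div_two])
      · exact (hc1.div hc2 hsinpos.ne').rpow_const (Or.inr hα0.le)
    have htend := (hcont.continuousWithinAt (s := Set.Iio (Real.pi/2))).tendsto
    have hs1 : Real.sin ((1+α)*(Real.pi/2)) = Real.cos (α*(Real.pi/2)) := by
      rw [show (1+α)*(Real.pi/2) = Real.pi/2 + α*(Real.pi/2) by ring,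
        Real.sin_add, Real.sin_pi_div_two, Real.cos_pi_div_two]
      ring
    have hval : kappaBar α (Real.pi/2)
        = α ^ α * Real.cos (Real.pi*α/2) ^ (α+1) / Real.sin (Real.pi*α/2) ^ α := by
      rw [kappaBar, hs1, Real.sin_pi_div_two,
        show α*(Real.pi/2) = Real.pi*α/2 by ring] at *
      rw [Real.div_rpow hcosnn hsinpos.le,
        Real.rpow_add' hcosnn (by positivity : α + 1 ≠ 0), Real.rpow_one]
      field_simp
    rw [← hval]
    exact htend
  · -- value at π/(2(1+α))
    have harg : (1+α) * (Real.pi/(2*(1+α))) = Real.pi/2 := by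
      field_simp
    have harg2 : α * (Real.pi/(2*(1+α))) = Real.pi*α/(2*(1+α)) := by ring
    have hsa : 0 < Real.sin (Real.pi*α/(2*(1+α))) := by
      apply Real.sin_pos_of_pos_of_lt_pi
      · positivity
      · rw [div_lt_iff₀ (by positivity)]
        nlinarith
    rw [kappaBar, harg, harg2, Real.sin_pi_div_two,
      Real.div_rpow zero_le_one hsa.le, Real.one_rpow]
    ring
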